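/- Consequently, for each uncountable cardinal λ, the linear orders J_α = (η·λ)·α for nonzero ordinals α are pairwise non-L_{∞,λ}-equivalent: if α ≠ β then J_α and J_β are not L_{∞,λ}-equivalent. Here η is the order type of ℚ and · is order-type multiplication. -/

import Mathlib

open Cardinal Set

/-- The linear order of order type `(η·λ)·α`, where `η` is the order type of `ℚ`:
the `α`-fold lexicographic sum of the `λ`-fold lexicographic sum of copies of `ℚ`. -/
def JOrd (lam : Cardinal.{0}) (α : Ordinal.{0}) : Type 1 :=
  {p : Ordinal ×ₗ Ordinal ×ₗ ℚ //
    (ofLex p).1 < α ∧ (ofLex (ofLex p).2).1 < lam.ord}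

noncomputable instance (lam : Cardinal.{0}) (α : Ordinal.{0}) : LinearOrder (JOrd lam α) :=
  inferInstanceAs (LinearOrder {p : Ordinal ×ₗ Ordinal ×ₗ ℚ //
    (ofLex p).1 < α ∧ (ofLex (ofLex p).2).1 < lam.ord})

/-- `G` is the graph of a partial order-isomorphism between linear orders. -/
def IsOrdIso {A B : Type*} [LinearOrder A] [LinearOrder B] (G : Set (A × B)) : Prop :=
  ∀ p ∈ G, ∀ q ∈ G, ((p : A × B).1 < q.1 ↔ p.2 < q.2) ∧ (p.1 = q.1 ↔ p.2 = q.2)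

/-- A back-and-forth system witnessing `L_{∞,λ}`-equivalence: a nonempty family of partial
order-isomorphisms of domain size `< λ`, closed under extension covering any subset of size
`< λ` on either side. -/
def IsBFSystem {A B : Type 1} [LinearOrder A] [LinearOrder B] (lam : Cardinal.{1})
    (F : Set (Set (A × B))) : Prop :=
  F.Nonempty ∧ (∀ G ∈ F, IsOrdIso G ∧ Cardinal.mk G < lam) ∧
    (∀ G ∈ F, ∀ S : Set A, Cardinal.mk S < lam →
      ∃ G' ∈ F, G ⊆ G' ∧ S ⊆ Prod.fst '' G') ∧
    (∀ G ∈ F, ∀ S : Set B, Cardinal.mk S < lam →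
      ∃ G' ∈ F, G ⊆ G' ∧ S ⊆ Prod.snd '' G')

namespace JProof

variable {lam : Cardinal.{0}} {α β : Ordinal.{0}}

/-- First coordinate (the block index). -/
def c1 (x : JOrd lam α) : Ordinal.{0} := (ofLex x.val).1

/-- Second coordinate. -/
def c2 (x : JOrd lam α) : Ordinal.{0} := (ofLex (ofLex x.val).2).1

/-- Third coordinate. -/
def c3 (x : JOrd lam α) : ℚ := (ofLex (ofLex x.val).2).2

lemma c1_lt (x : JOrd lam α) : c1 x < α := x.prop.1
lemma c2_lt (x : JOrd lam α) : c2 x < lam.ord := x.prop.2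

/-- Constructor. -/
def mk3 (γ δ : Ordinal.{0}) (q : ℚ) (h1 : γ < α) (h2 : δ < lam.ord) : JOrd lam α :=
  ⟨toLex (γ, toLex (δ, q)), ⟨h1, h2⟩⟩

@[simp] lemma c1_mk3 (γ δ : Ordinal.{0}) (q : ℚ) (h1 : γ < α) (h2 : δ < lam.ord) :
    c1 (mk3 γ δ q h1 h2) = γ := rfl

@[simp] lemma c2_mk3 (γ δ : Ordinal.{0}) (q : ℚ) (h1 : γ < α) (h2 : δ < lam.ord) :
    c2 (mk3 γ δ q h1 h2) = δ := rfl

lemma val_eq (x : JOrd lam α) : x.val = toLex (c1 x, toLex (c2 x, c3 x)) := rfl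

lemma ext3 {x y : JOrd lam α} (h1 : c1 x = c1 y) (h2 : c2 x = c2 y) (h3 : c3 x = c3 y) :
    x = y := by
  apply Subtype.ext
  rw [val_eq x, val_eq y, h1, h2, h3]

lemma lt_iff' (x y : JOrd lam α) :
    x < y ↔ c1 x < c1 y ∨ (c1 x = c1 y ∧ (c2 x < c2 y ∨ (c2 x = c2 y ∧ c3 x < c3 y))) := by
  constructor
  · intro h
    have h' : x.val < y.val := h
    rcases Prod.Lex.lt_iff.1 h' with h1 | ⟨h1, h2⟩
    · exact Or.inl h1
    · rcases Prod.Lex.lt_iff.1 h2 with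
        h3 | ⟨h3, h4⟩
      · exact Or.inr ⟨h1, Or.inl h3⟩
      · exact Or.inr ⟨h1, Or.inr ⟨h3, h4⟩⟩
  · intro h
    show x.val < y.val
    apply Prod.Lex.lt_iff.2
    rcases h with h1 | ⟨h1, h2⟩
    · exact Or.inl h1
    · refine Or.inr ⟨h1, ?_⟩
      apply Prod.Lex.lt_iff.2
      rcases h2 with h3 | ⟨h3, h4⟩
      · exact Or.inl h3
      · exact Or.inr ⟨h3, h4⟩

lemma c1_mono {x y : JOrd lam α} (h : x < y) : c1 x ≤ c1 y := by
  rcases (lt_iff' x y).1 h with h1 | ⟨h1, _⟩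
  · exact h1.le
  · exact h1.le

lemma lt_of_c1_lt {x y : JOrd lam α} (h : c1 x < c1 y) : x < y :=
  (lt_iff' x y).2 (Or.inl h)

/-! ### Cardinality facts -/

lemma aleph0_lt_lift (hlam : Cardinal.aleph0 < lam) :
    (Cardinal.aleph0 : Cardinal.{1}) < Cardinal.lift.{1, 0} lam := by
  rw [← Cardinal.lift_aleph0.{1, 0}]
  exact Cardinal.lift_lt.2 hlam

lemma one_lt_lift (hlam : Cardinal.aleph0 < lam) :
    (1 : Cardinal.{1}) < Cardinal.lift.{1, 0} lam :=
  lt_trans Cardinal.one_lt_aleph0 (aleph0_lt_lift hlam)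

/-- An interval within a single block has fewer than `λ` elements. -/
lemma small_interval (hlam : Cardinal.aleph0 < lam) (a a' : JOrd lam α)
    (h : c1 a = c1 a') :
    Cardinal.mk {x : JOrd lam α | a < x ∧ x < a'} < Cardinal.lift.{1, 0} lam := by
  classical
  set S := {x : JOrd lam α | a < x ∧ x < a'} with hS
  have hbound : ∀ x : S, c2 x.val ≤ c2 a' := by
    rintro ⟨x, hx1, hx2⟩
    have hle1 : c1 a ≤ c1 x := c1_mono hx1
    have hle2 : c1 x ≤ c1 a' := c1_mono hx2
    have hceq : c1 x = c1 a' := le_antisymm hle2 (h ▸ hle1)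
    rcases (lt_iff' x a').1 hx2 with h1 | ⟨_, h2⟩
    · exact absurd h1 (by simp [hceq])
    · rcases h2 with h3 | ⟨h3, _⟩
      · exact h3.le
      · exact h3.le
  let f : S → ↥(Set.Iio (c2 a' + 1)) × ℚ := fun x =>
    (⟨c2 x.val, lt_of_le_of_lt (hbound x) (lt_of_lt_of_le (lt_add_one _) le_rfl)⟩, c3 x.val)
  have hf : Function.Injective f := by
    rintro ⟨x, hx⟩ ⟨y, hy⟩ hxy
    have h2 : c2 x = c2 y := congrArg (fun p => (p.1 : Ordinal)) hxy
    have h3 : c3 x = c3 y := congrArg (fun p => p.2) hxy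
    have hc1x : c1 x = c1 a' := by
      have hle1 : c1 a ≤ c1 x := c1_mono hx.1
      have hle2 : c1 x ≤ c1 a' := c1_mono hx.2
      exact le_antisymm hle2 (h ▸ hle1)
    have hc1y : c1 y = c1 a' := by
      have hle1 : c1 a ≤ c1 y := c1_mono hy.1
      have hle2 : c1 y ≤ c1 a' := c1_mono hy.2
      exact le_antisymm hle2 (h ▸ hle1)
    exact Subtype.ext (ext3 (hc1x.trans hc1y.symm) h2 h3)
  have hle : Cardinal.mk S ≤ Cardinal.mk (↥(Set.Iio (c2 a' + 1)) × ℚ) :=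
    Cardinal.mk_le_of_injective hf
  have hcard : Cardinal.mk (↥(Set.Iio (c2 a' + 1)) × ℚ)
      = Cardinal.lift.{1, 0} (((c2 a' + 1).card) * Cardinal.aleph0) := by
    rw [Cardinal.mk_prod, Cardinal.lift_uzero, Ordinal.mk_Iio_ordinal, Cardinal.mkRat,
      Cardinal.lift_mul]
  have hlt : ((c2 a' + 1).card) * Cardinal.aleph0 < lam := by
    apply Cardinal.mul_lt_of_lt hlam.le _ hlam
    rw [Ordinal.card_add, Ordinal.card_one]
    exact Cardinal.add_lt_of_lt hlam.le (Cardinal.lt_ord.1 (c2_lt a'))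
      (lt_trans Cardinal.one_lt_aleph0 hlam)
  calc Cardinal.mk S ≤ _ := hle
    _ = _ := hcard
    _ < Cardinal.lift.{1, 0} lam := Cardinal.lift_lt.2 hlt

/-- An interval crossing blocks has at least `λ` elements. -/
lemma big_interval (hlam : Cardinal.aleph0 < lam) (a a' : JOrd lam α)
    (h : c1 a < c1 a') :
    Cardinal.lift.{1, 0} lam ≤ Cardinal.mk {x : JOrd lam α | a < x ∧ x < a'} := by
  classical
  set S := {x : JOrd lam α | a < x ∧ x < a'} with hS
  set D := {δ : Ordinal.{0} | c2 a < δ ∧ δ < lam.ord} with hD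
  have hDS : Cardinal.mk D ≤ Cardinal.mk S := by
    let f : D → S := fun δ =>
      ⟨mk3 (c1 a) δ.val 0 (c1_lt a) δ.prop.2, by
        constructor
        · exact (lt_iff' _ _).2 (Or.inr ⟨rfl, Or.inl (by simpa using δ.prop.1)⟩)
        · exact lt_of_c1_lt (by simpa using h)⟩
    have hf : Function.Injective f := by
      rintro ⟨δ, hδ⟩ ⟨δ', hδ'⟩ hxy
      apply Subtype.ext
      have h := congrArg (fun x : S => c2 (x : JOrd lam α)) hxy
      exact h
    exact Cardinal.mk_le_of_injective hf
  by_contra hcon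
  push_neg at hcon
  have hDlt : Cardinal.mk D < Cardinal.lift.{1, 0} lam := lt_of_le_of_lt hDS hcon
  have hsub : Set.Iio lam.ord ⊆ Set.Iio (c2 a + 1) ∪ D := by
    intro δ hδ
    rcases le_or_gt δ (c2 a) with hle | hlt
    · exact Or.inl (lt_of_le_of_lt hle (lt_add_one _))
    · exact Or.inr ⟨hlt, hδ⟩
  have hIlt : Cardinal.mk (Set.Iio (c2 a + 1)) < Cardinal.lift.{1, 0} lam := by
    rw [Ordinal.mk_Iio_ordinal]
    apply Cardinal.lift_lt.2
    rw [Ordinal.card_add, Ordinal.card_one]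
    exact Cardinal.add_lt_of_lt hlam.le (Cardinal.lt_ord.1 (c2_lt a))
      (lt_trans Cardinal.one_lt_aleph0 hlam)
  have hbig : Cardinal.lift.{1, 0} lam ≤ Cardinal.mk (Set.Iio (c2 a + 1) ∪ D : Set Ordinal.{0}) := by
    have h1 : Cardinal.mk (Set.Iio lam.ord) = Cardinal.lift.{1, 0} lam := by
      rw [Ordinal.mk_Iio_ordinal, Cardinal.card_ord]
    rw [← h1]
    exact Cardinal.mk_le_mk_of_subset hsub
  have := lt_of_le_of_lt (le_trans hbig (Cardinal.mk_union_le _ _))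
    (Cardinal.add_lt_of_lt (aleph0_lt_lift hlam).le hIlt hDlt)
  exact lt_irrefl _ this

/-! ### Abstract back-and-forth arguments -/

section Abstract

variable {A B : Type 1} [LinearOrder A] [LinearOrder B] {lam' : Cardinal.{1}}
  {F : Set (Set (A × B))}

/-- The two-step argument: a pair of matched pairs with a small interval on the left and a
big interval on the right is impossible. -/
lemma no_small_big (hF : IsBFSystem lam' F) (hlam' : (1 : Cardinal.{1}) < lam')
    {G : Set (A × B)} (hG : G ∈ F) {a a' : A} {b b' : B}
    (hab : (a, b) ∈ G) (hab' : (a', b') ∈ G)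
    (hsmall : Cardinal.mk {x : A | a < x ∧ x < a'} < lam')
    (hbig : lam' ≤ Cardinal.mk {y : B | b < y ∧ y < b'}) : False := by
  classical
  obtain ⟨G', hG', hGG', hScov⟩ := hF.2.2.1 G hG {x : A | a < x ∧ x < a'} hsmall
  set T := Prod.snd '' G' with hT
  have hTlt : Cardinal.mk T < lam' :=
    lt_of_le_of_lt (Cardinal.mk_image_le) ((hF.2.1 G' hG').2)
  have hc : ∃ c, (b < c ∧ c < b') ∧ c ∉ T := by
    by_contra hcon
    push_neg at hcon
    have hsub : {y : B | b < y ∧ y < b'} ⊆ T := fun y hy => hcon y hy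
    exact absurd (le_trans hbig (Cardinal.mk_le_mk_of_subset hsub)) (not_le.2 hTlt)
  obtain ⟨c, hcmem, hcT⟩ := hc
  have hone : Cardinal.mk ({c} : Set B) < lam' := by
    rw [Cardinal.mk_singleton]; exact hlam'
  obtain ⟨G'', hG'', hG'G'', hccov⟩ := hF.2.2.2 G' hG' {c} hone
  obtain ⟨p, hp, hpc⟩ := hccov (Set.mem_singleton c)
  have iso := (hF.2.1 G'' hG'').1
  have habG'' : (a, b) ∈ G'' := hG'G'' (hGG' hab)
  have hab'G'' : (a', b') ∈ G'' := hG'G'' (hGG' hab')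
  have h1 : a < p.1 := (iso (a, b) habG'' p hp).1.2 (by rw [hpc]; exact hcmem.1)
  have h2 : p.1 < a' := (iso p hp (a', b') hab'G'').1.2 (by rw [hpc]; exact hcmem.2)
  obtain ⟨p', hp', hp'1⟩ := hScov (Set.mem_setOf.2 ⟨h1, h2⟩)
  have hp'G'' : p' ∈ G'' := hG'G'' hp'
  have : p'.2 = p.2 := (iso p' hp'G'' p hp).2.1 hp'1
  apply hcT
  rw [← hpc, ← this]
  exact Set.mem_image_of_mem Prod.snd hp'

/-- Swapping a back-and-forth system. -/
lemma bf_swap (hF : IsBFSystem lam' F) :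
    IsBFSystem lam' ((fun G => Prod.swap '' G) '' F) := by
  classical
  obtain ⟨hne, hiso, hextA, hextB⟩ := hF
  refine ⟨hne.image _, ?_, ?_, ?_⟩
  · rintro H ⟨G, hG, rfl⟩
    refine ⟨?_, ?_⟩
    · rintro p ⟨p₀, hp₀, rfl⟩ q ⟨q₀, hq₀, rfl⟩
      have h := hiso G hG
      exact ⟨(h.1 p₀ hp₀ q₀ hq₀).1.symm, (h.1 p₀ hp₀ q₀ hq₀).2.symm⟩
    · have : Cardinal.mk (Prod.swap '' G) ≤ Cardinal.mk G := Cardinal.mk_image_le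
      exact lt_of_le_of_lt this (hiso G hG).2
  · rintro H ⟨G, hG, rfl⟩ S hSlt
    obtain ⟨G', hG', hGG', hcov⟩ := hextB G hG S hSlt
    refine ⟨Prod.swap '' G', Set.mem_image_of_mem _ hG', Set.image_mono hGG', ?_⟩
    intro y hy
    obtain ⟨p, hp, hps⟩ := hcov hy
    exact ⟨Prod.swap p, Set.mem_image_of_mem _ hp, hps⟩
  · rintro H ⟨G, hG, rfl⟩ S hSlt
    obtain ⟨G', hG', hGG', hcov⟩ := hextA G hG S hSlt
    refine ⟨Prod.swap '' G', Set.mem_image_of_mem _ hG', Set.image_mono hGG', ?_⟩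
    intro y hy
    obtain ⟨p, hp, hps⟩ := hcov hy
    exact ⟨Prod.swap p, Set.mem_image_of_mem _ hp, hps⟩

variable (cA : A → Ordinal.{0}) (cB : B → Ordinal.{0})

/-- One step of the transfinite induction on block indices. -/
lemma step (hF : IsBFSystem lam' F) (hlam' : (1 : Cardinal.{1}) < lam')
    (hmonoA : ∀ x y : A, x < y → cA x ≤ cA y)
    (hstrictB : ∀ x y : B, cB x < cB y → x < y)
    (hE : ∀ G ∈ F, ∀ p ∈ G, ∀ q ∈ G,
      (cA (p : A × B).1 = cA (q : A × B).1 ↔ cB p.2 = cB q.2))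
    (hrepA : ∀ (x : A) (δ : Ordinal.{0}), δ < cA x → ∃ y : A, cA y = δ)
    (hrepB : ∀ (y : B) (δ : Ordinal.{0}), δ < cB y → ∃ x : B, cB x = δ)
    (γ : Ordinal.{0})
    (IH : ∀ δ < γ, ∀ G ∈ F, ∀ p ∈ G, (cA (p : A × B).1 = δ ↔ cB p.2 = δ)) :
    ∀ G ∈ F, ∀ p ∈ G, cA (p : A × B).1 = γ → cB p.2 = γ := by
  classical
  intro G hG p hp hpγ
  have hsing : ∀ (x : A), Cardinal.mk ({x} : Set A) < lam' := by
    intro x; rw [Cardinal.mk_singleton]; exact hlam'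
  have hsingB : ∀ (y : B), Cardinal.mk ({y} : Set B) < lam' := by
    intro y; rw [Cardinal.mk_singleton]; exact hlam'
  have h1 : ¬ cB p.2 < γ := by
    intro hlt
    obtain ⟨a, ha⟩ := hrepA p.1 (cB p.2) (hpγ ▸ hlt)
    obtain ⟨G', hG', hsub, hcov⟩ := hF.2.2.1 G hG {a} (hsing a)
    obtain ⟨q, hq, hq1⟩ := hcov (Set.mem_singleton a)
    have hq2 : cB q.2 = cB p.2 :=
      (IH (cB p.2) hlt G' hG' q hq).1 (by rw [hq1, ha])
    have := (hE G' hG' q hq p (hsub hp)).2 hq2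
    rw [hq1, ha, hpγ] at this
    exact absurd this (ne_of_lt hlt)
  have h2 : ¬ γ < cB p.2 := by
    intro hlt
    obtain ⟨bb, hbb⟩ := hrepB p.2 γ hlt
    obtain ⟨G', hG', hsub, hcov⟩ := hF.2.2.2 G hG {bb} (hsingB bb)
    obtain ⟨q, hq, hq2⟩ := hcov (Set.mem_singleton bb)
    have hqb : cB q.2 = γ := by rw [hq2, hbb]
    rcases lt_trichotomy (cA q.1) γ with hc | hc | hc
    · have := (IH (cA q.1) hc G' hG' q hq).1 rfl
      rw [hqb] at this
      exact absurd this (ne_of_gt hc)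
    · have := (hE G' hG' q hq p (hsub hp)).1 (by rw [hc, hpγ])
      rw [hqb] at this
      exact absurd this (ne_of_lt hlt)
    · have hq2p : q.2 < p.2 := hstrictB _ _ (by rw [hqb]; exact hlt)
      have hq1p : q.1 < p.1 :=
        ((hF.2.1 G' hG').1 q hq p (hsub hp)).1.2 hq2p
      have := hmonoA _ _ hq1p
      rw [hpγ] at this
      exact absurd hc (not_lt.2 this)
  exact le_antisymm (not_lt.1 h2) (not_lt.1 h1)

/-- The induced map on block indices is the identity. -/
lemma key (hF : IsBFSystem lam' F) (hlam' : (1 : Cardinal.{1}) < lam')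
    (hmonoA : ∀ x y : A, x < y → cA x ≤ cA y)
    (hmonoB : ∀ x y : B, x < y → cB x ≤ cB y)
    (hstrictA : ∀ x y : A, cA x < cA y → x < y)
    (hstrictB : ∀ x y : B, cB x < cB y → x < y)
    (hE : ∀ G ∈ F, ∀ p ∈ G, ∀ q ∈ G,
      (cA (p : A × B).1 = cA (q : A × B).1 ↔ cB p.2 = cB q.2))
    (hrepA : ∀ (x : A) (δ : Ordinal.{0}), δ < cA x → ∃ y : A, cA y = δ)
    (hrepB : ∀ (y : B) (δ : Ordinal.{0}), δ < cB y → ∃ x : B, cB x = δ)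
    (γ : Ordinal.{0}) :
    ∀ G ∈ F, ∀ p ∈ G, (cA (p : A × B).1 = γ ↔ cB p.2 = γ) := by
  induction γ using Ordinal.induction with
  | _ γ IH =>
    intro G hG p hp
    constructor
    · exact step cA cB hF hlam' hmonoA hstrictB hE hrepA hrepB γ IH G hG p hp
    · -- apply `step` to the swapped system
      intro hpb
      have hFs : IsBFSystem lam' ((fun G => Prod.swap '' G) '' F) := bf_swap hF
      have hEs : ∀ H ∈ (fun G => Prod.swap '' G) '' F, ∀ p ∈ H, ∀ q ∈ H,
          (cB (p : B × A).1 = cB (q : B × A).1 ↔ cA p.2 = cA q.2) := by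
        rintro H ⟨G₀, hG₀, rfl⟩ p₀ ⟨p₁, hp₁, rfl⟩ q₀ ⟨q₁, hq₁, rfl⟩
        exact ((hE G₀ hG₀ p₁ hp₁ q₁ hq₁).symm)
      have hIHs : ∀ δ < γ, ∀ H ∈ (fun G => Prod.swap '' G) '' F, ∀ p ∈ H,
          (cB (p : B × A).1 = δ ↔ cA p.2 = δ) := by
        rintro δ hδ H ⟨G₀, hG₀, rfl⟩ p₀ ⟨p₁, hp₁, rfl⟩
        exact (IH δ hδ G₀ hG₀ p₁ hp₁).symm
      have := step cB cA hFs hlam' hmonoB hstrictA hEs hrepB hrepA γ hIHs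
        (Prod.swap '' G) (Set.mem_image_of_mem _ hG)
        (Prod.swap p) (Set.mem_image_of_mem _ hp) hpb
      exact this

end Abstract

/-! ### Specializing to `JOrd` -/

/-- One direction of preservation of the block relation. -/
lemma epres_dir (hlam : Cardinal.aleph0 < lam)
    {F : Set (Set (JOrd lam α × JOrd lam β))}
    (hF : IsBFSystem (Cardinal.lift.{1, 0} lam) F)
    {G : Set (JOrd lam α × JOrd lam β)} (hG : G ∈ F)
    {p q : JOrd lam α × JOrd lam β} (hp : p ∈ G) (hq : q ∈ G)
    (h : c1 p.1 = c1 q.1) : c1 p.2 = c1 q.2 := by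
  by_contra hne
  have iso := (hF.2.1 G hG).1
  rcases lt_trichotomy p.1 q.1 with hc | hc | hc
  · have hb : p.2 < q.2 := (iso p hp q hq).1.1 hc
    have hble : c1 p.2 ≤ c1 q.2 := c1_mono hb
    have hblt : c1 p.2 < c1 q.2 := lt_of_le_of_ne hble hne
    exact no_small_big hF (one_lt_lift hlam) hG
      (show (p.1, p.2) ∈ G by simpa using hp)
      (show (q.1, q.2) ∈ G by simpa using hq)
      (small_interval hlam p.1 q.1 h)
      (big_interval hlam p.2 q.2 hblt)
  · have : p.2 = q.2 := (iso p hp q hq).2.1 hc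
    exact hne (by rw [this])
  · have hb : q.2 < p.2 := (iso q hq p hp).1.1 hc
    have hble : c1 q.2 ≤ c1 p.2 := c1_mono hb
    have hblt : c1 q.2 < c1 p.2 := lt_of_le_of_ne hble (fun hh => hne hh.symm)
    exact no_small_big hF (one_lt_lift hlam) hG
      (show (q.1, q.2) ∈ G by simpa using hq)
      (show (p.1, p.2) ∈ G by simpa using hp)
      (small_interval hlam q.1 p.1 h.symm)
      (big_interval hlam q.2 p.2 hblt)

/-- Full preservation of the block relation. -/
lemma epres (hlam : Cardinal.aleph0 < lam)
    {F : Set (Set (JOrd lam α × JOrd lam β))}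
    (hF : IsBFSystem (Cardinal.lift.{1, 0} lam) F)
    {G : Set (JOrd lam α × JOrd lam β)} (hG : G ∈ F)
    {p q : JOrd lam α × JOrd lam β} (hp : p ∈ G) (hq : q ∈ G) :
    c1 p.1 = c1 q.1 ↔ c1 p.2 = c1 q.2 := by
  constructor
  · exact epres_dir hlam hF hG hp hq
  · intro h
    exact epres_dir hlam (bf_swap hF) (Set.mem_image_of_mem _ hG)
      (Set.mem_image_of_mem Prod.swap hp) (Set.mem_image_of_mem Prod.swap hq) h

lemma ord_pos (hlam : Cardinal.aleph0 < lam) : (0 : Ordinal.{0}) < lam.ord := by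
  rw [Cardinal.lt_ord, Ordinal.card_zero]
  exact lt_trans (by exact_mod_cast Cardinal.aleph0_pos) hlam

/-- Main lemma: no back-and-forth system when `α < β`. -/
lemma aux (hlam : Cardinal.aleph0 < lam) (hαβ : α < β)
    (F : Set (Set (JOrd lam α × JOrd lam β)))
    (hF : IsBFSystem (Cardinal.lift.{1, 0} lam) F) : False := by
  classical
  have h0 : (0 : Ordinal.{0}) < lam.ord := ord_pos hlam
  set b0 : JOrd lam β := mk3 α 0 0 hαβ h0 with hb0
  obtain ⟨G, hG⟩ := hF.1
  have hone : Cardinal.mk ({b0} : Set (JOrd lam β)) < Cardinal.lift.{1, 0} lam := by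
    rw [Cardinal.mk_singleton]; exact one_lt_lift hlam
  obtain ⟨G', hG', _, hcov⟩ := hF.2.2.2 G hG {b0} hone
  obtain ⟨p, hp, hp2⟩ := hcov (Set.mem_singleton b0)
  have hkey := key (c1 : JOrd lam α → Ordinal.{0}) (c1 : JOrd lam β → Ordinal.{0})
    hF (one_lt_lift hlam)
    (fun x y h => c1_mono h) (fun x y h => c1_mono h)
    (fun x y h => lt_of_c1_lt h) (fun x y h => lt_of_c1_lt h)
    (fun G hG p hp q hq => epres hlam hF hG hp hq)
    (fun x δ hδ => ⟨mk3 δ 0 0 (lt_trans hδ (c1_lt x)) h0, rfl⟩)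
    (fun y δ hδ => ⟨mk3 δ 0 0 (lt_trans hδ (c1_lt y)) h0, rfl⟩)
    (c1 p.1) G' hG' p hp
  have := hkey.1 rfl
  rw [hp2] at this
  have hb0c : c1 b0 = α := rfl
  rw [hb0c] at this
  have h2 := c1_lt p.1
  rw [← this] at h2
  exact lt_irrefl α h2

end JProof

/-- For an uncountable cardinal `λ`, the linear orders `J_α = (η·λ)·α` for distinct nonzero
ordinals `α ≠ β` are not `L_{∞,λ}`-equivalent. -/
theorem JOrd_not_L_infty_lam_equivalent (lam : Cardinal.{0}) (hlam : Cardinal.aleph0 < lam)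
    (α β : Ordinal.{0}) (hα : α ≠ 0) (hβ : β ≠ 0) (hne : α ≠ β) :
    ¬ ∃ F : Set (Set (JOrd lam α × JOrd lam β)), IsBFSystem (Cardinal.lift.{1, 0} lam) F := by
  rintro ⟨F, hF⟩
  rcases hne.lt_or_gt with h | h
  · exact JProof.aux hlam h F hF
  · exact JProof.aux hlam h _ (JProof.bf_swap hF)
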